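/- Let 0 < λN < λN1 be real numbers, let ε > 0 satisfy 1/ε ≥ 3·λN1 + λN, and let θ ∈ ℝ satisfy 2θ(εθ − 1) + λN + λN1 = 0. Then for every real λ with λ ≤ λN or λ ≥ λN1 and every μ ∈ ℝ, the complex number R(μ) := (−εμ² + λ + θ(εθ−1)) + i·(1 − 2εθ)·μ satisfies |R(μ)| ≥ (λN1 − λN)/2. -/

import Mathlib

open Complex

theorem stmt_0 (lamN lamN1 eps theta : ℝ)
    (hlamN : 0 < lamN) (hlt : lamN < lamN1)
    (heps : 0 < eps) (hgap : 1 / eps ≥ 3 * lamN1 + lamN)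
    (htheta : 2 * theta * (eps * theta - 1) + lamN + lamN1 = 0) :
    ∀ lam : ℝ, (lam ≤ lamN ∨ lam ≥ lamN1) → ∀ mu : ℝ,
      ‖(((-eps * mu ^ 2 + lam + theta * (eps * theta - 1)) : ℝ)
          + Complex.I * ((1 - 2 * eps * theta) * mu : ℝ) : ℂ)‖
        ≥ (lamN1 - lamN) / 2 := by
  intro lam hlam mu
  set a : ℝ := -eps * mu ^ 2 + lam + theta * (eps * theta - 1) with ha
  set b : ℝ := (1 - 2 * eps * theta) * mu with hb
  have habs : ‖(a : ℂ) + Complex.I * (b : ℂ)‖ = Real.sqrt (a ^ 2 + b ^ 2) := by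
    rw [mul_comm, Complex.norm_add_mul_I]
  rw [habs, ge_iff_le]
  have hg : 0 ≤ (lamN1 - lamN) / 2 := by linarith
  rw [Real.le_sqrt hg]
  -- key algebraic identities
  have hth : theta * (eps * theta - 1) = -(lamN + lamN1) / 2 := by linarith
  have hbsq : b ^ 2 = (1 - 2 * eps * (lamN + lamN1)) * mu ^ 2 := by
    rw [hb]; linear_combination (2 * eps * mu ^ 2) * htheta
  have he1 : (3 * lamN1 + lamN) * eps ≤ 1 := by
    rw [← le_div_iff₀ heps] at *; exact hgap
  have hkey : (3 * lamN1 + lamN) * (eps * mu ^ 2) ≤ mu ^ 2 := by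
    nlinarith [mul_le_mul_of_nonneg_right he1 (sq_nonneg mu)]
  have hemu : 0 ≤ eps * mu ^ 2 := mul_nonneg heps.le (sq_nonneg mu)
  rcases hlam with h | h
  · -- λ ≤ λN : real part ≤ -(λN1-λN)/2
    have haneg : a ≤ -(lamN1 - lamN) / 2 := by rw [ha, hth]; nlinarith
    nlinarith [sq_nonneg b, sq_nonneg (a + (lamN1 - lamN) / 2)]
  · -- λ ≥ λN1
    rw [hbsq, ha, hth]
    nlinarith [hkey, hemu, sq_nonneg (eps * mu ^ 2 + (lamN1 - lamN) / 2 - (lam + (lamN + lamN1) / 2 - (lamN + lamN1))),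
      sq_nonneg (eps * mu ^ 2 - lam + (lamN + lamN1) / 2), mul_nonneg hemu (by linarith : (0:ℝ) ≤ lamN1 - lamN)]
  positivity
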